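/- Let n ≥ 7 and let ℱ be an independent set of flags of type {1,n−3} of [n]. If B₁ ⊆ [n] with |B₁| = n−3 has ℱ-weight n−3 (maximal weight), then every singleton A ⊆ [n] \ B₁ has ℱ-weight at most C(n−1,3) − C(n−3,3). -/

import Mathlib

open Finset

/-- The ground set `[n] = {1,…,n}`. -/
def Iv (n : ℕ) : Finset ℕ := Finset.Icc 1 n

/-- A flag of type `{a,b}` of `[n]`: a pair `(A,B)` with `A ⊆ B ⊆ [n]`, `|A| = a`, `|B| = b`. -/
def IsFlag (n a b : ℕ) (f : Finset ℕ × Finset ℕ) : Prop :=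
  f.1 ⊆ f.2 ∧ f.2 ⊆ Iv n ∧ f.1.card = a ∧ f.2.card = b

/-- Opposition of flags `(A₁,B₁)`, `(A₂,B₂)`: `B₁ ∪ B₂ = [n]`, `A₁ ∩ B₂ = ∅`, `A₂ ∩ B₁ = ∅`. -/
def OppFlag (n : ℕ) (f g : Finset ℕ × Finset ℕ) : Prop :=
  f.2 ∪ g.2 = Iv n ∧ f.1 ∩ g.2 = ∅ ∧ g.1 ∩ f.2 = ∅

/-- An independent (EKR) set of flags: pairwise non-opposite. -/
def Indep (n : ℕ) (F : Finset (Finset ℕ × Finset ℕ)) : Prop :=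
  ∀ f ∈ F, ∀ g ∈ F, ¬ OppFlag n f g

/-- The `ℱ`-weight of a `b`-set `B`: the number of flags in `ℱ` with second component `B`. -/
def weightB (F : Finset (Finset ℕ × Finset ℕ)) (B : Finset ℕ) : ℕ :=
  (F.filter (fun f => f.2 = B)).card

/-- The `ℱ`-weight of an `a`-set `A`: the number of flags in `ℱ` with first component `A`. -/
def weightA (F : Finset (Finset ℕ × Finset ℕ)) (A : Finset ℕ) : ℕ :=
  (F.filter (fun f => f.1 = A)).card

/-- A maximal independent set of flags of type `{a,b}`. -/
def MaximalIndep (n a b : ℕ) (F : Finset (Finset ℕ × Finset ℕ)) : Prop :=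
  (∀ f ∈ F, IsFlag n a b f) ∧ Indep n F ∧
    (∀ f, IsFlag n a b f → Indep n (insert f F) → f ∈ F)

/-- Counting `k`-subsets of `s` containing a fixed subset `t`. -/
lemma card_filter_superset (s t : Finset ℕ) (k : ℕ) (hts : t ⊆ s) (htk : t.card ≤ k) :
    ((s.powersetCard k).filter (fun B => t ⊆ B)).card =
      (s.card - t.card).choose (k - t.card) := by
  rw [show s.card - t.card = (s \ t).card from (Finset.card_sdiff_of_subset hts).symm,
    ← Finset.card_powersetCard]
  apply Finset.card_bij' (fun B _ => B \ t) (fun C _ => C ∪ t)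
  · intro B hB
    simp only [Finset.mem_filter, Finset.mem_powersetCard] at hB ⊢
    refine ⟨Finset.sdiff_subset_sdiff hB.1.1 le_rfl, ?_⟩
    rw [Finset.card_sdiff_of_subset hB.2, hB.1.2]
  · intro C hC
    simp only [Finset.mem_filter, Finset.mem_powersetCard] at hC ⊢
    have hCs : C ⊆ s \ t := hC.1
    have hdisj : Disjoint C t := Finset.disjoint_of_subset_left hCs (Finset.sdiff_disjoint)
    refine ⟨⟨Finset.union_subset (hCs.trans (Finset.sdiff_subset)) hts, ?_⟩,
      Finset.subset_union_right⟩
    rw [Finset.card_union_of_disjoint hdisj, hC.2]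
    omega
  · intro B hB
    simp only [Finset.mem_filter] at hB
    exact Finset.sdiff_union_of_subset hB.2
  · intro C hC
    simp only [Finset.mem_powersetCard] at hC
    exact Finset.union_sdiff_cancel_right
      (Finset.disjoint_of_subset_left hC.1 Finset.sdiff_disjoint)

/-- if `B₁` is an `(n−3)`-set of maximal `ℱ`-weight `n−3` in an
independent set `ℱ` of flags of type `{1,n−3}` (`n ≥ 7`), then every singleton
`A ⊆ [n] \ B₁` has weight at most `C(n−1,3) − C(n−3,3)`. -/
theorem stmt_11 (n : ℕ) (hn : 7 ≤ n)
    (F : Finset (Finset ℕ × Finset ℕ)) (hflags : ∀ f ∈ F, IsFlag n 1 (n - 3) f)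
    (hindep : Indep n F)
    (B₁ : Finset ℕ) (hB₁ : B₁ ⊆ Iv n) (hB₁card : B₁.card = n - 3)
    (hw : weightB F B₁ = n - 3)
    (A : Finset ℕ) (hA1 : A.card = 1) (hAsub : A ⊆ Iv n \ B₁) :
    weightA F A ≤ Nat.choose (n - 1) 3 - Nat.choose (n - 3) 3 := by
  have hIv : (Iv n).card = n := by
    simp [Iv, Nat.card_Icc]
  -- every singleton in B₁ extends to a flag of F with second component B₁
  have hfull : ∀ a ∈ B₁, (({a}, B₁) : Finset ℕ × Finset ℕ) ∈ F := by
    intro a ha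
    set G := F.filter (fun f => f.2 = B₁) with hG
    have hGim : G.image (fun f => f.1) = B₁.powersetCard 1 := by
      apply Finset.eq_of_subset_of_card_le
      · intro S hS
        simp only [Finset.mem_image] at hS
        obtain ⟨f, hf, rfl⟩ := hS
        rw [hG, Finset.mem_filter] at hf
        obtain ⟨hfF, hf2⟩ := hf
        obtain ⟨h1, _, h3, _⟩ := hflags f hfF
        rw [Finset.mem_powersetCard]
        exact ⟨hf2 ▸ h1, h3⟩
      · rw [Finset.card_powersetCard, hB₁card, Nat.choose_one_right]
        rw [Finset.card_image_of_injOn]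
        · exact le_of_eq hw.symm
        · intro f hf g hg hfg
          rw [hG, Finset.mem_coe, Finset.mem_filter] at hf hg
          exact Prod.ext hfg (hf.2.trans hg.2.symm)
    have : ({a} : Finset ℕ) ∈ G.image (fun f => f.1) := by
      rw [hGim, Finset.mem_powersetCard]
      exact ⟨Finset.singleton_subset_iff.2 ha, Finset.card_singleton a⟩
    simp only [Finset.mem_image] at this
    obtain ⟨f, hf, hf1⟩ := this
    rw [hG, Finset.mem_filter] at hf
    have : f = ({a}, B₁) := Prod.ext hf1 hf.2
    exact this ▸ hf.1
  -- target set
  set S : Finset ℕ := Iv n \ B₁ with hS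
  have hScard : S.card = 3 := by
    rw [hS, Finset.card_sdiff_of_subset hB₁, hIv, hB₁card]; omega
  set T : Finset (Finset ℕ) :=
    ((Iv n).powersetCard (n - 3)).filter (fun B => A ⊆ B ∧ ¬ S ⊆ B) with hT
  -- the map f ↦ f.2 injects the flags with first component A into T
  have hmap : weightA F A ≤ T.card := by
    apply Finset.card_le_card_of_injOn (fun f => f.2)
    · intro f hf
      rw [Finset.mem_coe, Finset.mem_filter] at hf
      obtain ⟨hfF, hf1⟩ := hf
      obtain ⟨h1, h2, h3, h4⟩ := hflags f hfF
      rw [hT, Finset.mem_coe, Finset.mem_filter, Finset.mem_powersetCard]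
      refine ⟨⟨h2, h4⟩, hf1 ▸ h1, ?_⟩
      -- if S ⊆ f.2, we get an opposition contradiction
      intro hSsub
      have hunion : f.2 ∪ B₁ = Iv n := by
        apply Finset.Subset.antisymm
        · exact Finset.union_subset h2 hB₁
        · intro x hx
          by_cases hxB : x ∈ B₁
          · exact Finset.mem_union_right _ hxB
          · exact Finset.mem_union_left _ (hSsub (by rw [hS]; simp [hx, hxB]))
      have hne : ∃ a ∈ B₁, a ∉ f.2 := by
        by_contra hcon
        push_neg at hcon
        have : B₁ = f.2 := Finset.eq_of_subset_of_card_le hcon (by omega)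
        rw [← hunion, ← this, Finset.union_self] at hIv
        omega
      obtain ⟨a, haB, haf⟩ := hne
      apply hindep f hfF (({a}, B₁)) (hfull a haB)
      refine ⟨hunion, ?_, ?_⟩
      · rw [hf1, Finset.eq_empty_iff_forall_notMem]
        intro x hx
        rw [Finset.mem_inter] at hx
        have := hAsub hx.1
        rw [Finset.mem_sdiff] at this
        exact this.2 hx.2
      · exact Finset.singleton_inter_of_notMem haf
    · intro f hf g hg hfg
      rw [Finset.coe_filter, Set.mem_setOf_eq] at hf hg
      exact Prod.ext (hf.2.trans hg.2.symm) hfg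
  -- compute the cardinality of T
  have hAS : A ⊆ S := hAsub
  have hcardT : T.card = Nat.choose (n - 1) 3 - Nat.choose (n - 3) 3 := by
    have hfilt : T = (((Iv n).powersetCard (n - 3)).filter (fun B => A ⊆ B)) \
        (((Iv n).powersetCard (n - 3)).filter (fun B => S ⊆ B)) := by
      rw [hT]
      ext B
      simp only [Finset.mem_filter, Finset.mem_sdiff]
      constructor
      · rintro ⟨hB, hA, hnS⟩
        exact ⟨⟨hB, hA⟩, fun h => hnS h.2⟩
      · rintro ⟨⟨hB, hA⟩, hnS⟩
        exact ⟨hB, hA, fun h => hnS ⟨hB, h⟩⟩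
    have hsub : (((Iv n).powersetCard (n - 3)).filter (fun B => S ⊆ B)) ⊆
        (((Iv n).powersetCard (n - 3)).filter (fun B => A ⊆ B)) := by
      intro B hB
      rw [Finset.mem_filter] at hB ⊢
      exact ⟨hB.1, hAS.trans hB.2⟩
    have hPA : (((Iv n).powersetCard (n - 3)).filter (fun B => A ⊆ B)).card =
        Nat.choose (n - 1) 3 := by
      rw [card_filter_superset _ _ _ (hAsub.trans (Finset.sdiff_subset)) (by omega : A.card ≤ n - 3),
        hIv, hA1]
      have h1 : n - 1 - 3 = n - 3 - 1 := by omega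
      rw [← Nat.choose_symm (by omega : 3 ≤ n - 1), h1]
    have hPS : (((Iv n).powersetCard (n - 3)).filter (fun B => S ⊆ B)).card =
        Nat.choose (n - 3) 3 := by
      rw [card_filter_superset _ _ _ (by rw [hS]; exact Finset.sdiff_subset)
        (by rw [hScard]; omega : S.card ≤ n - 3), hIv, hScard]
      rw [← Nat.choose_symm (by omega : 3 ≤ n - 3)]
    rw [hfilt, Finset.card_sdiff_of_subset hsub, hPA, hPS]
  omega
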